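/- If i : C → D is a G-equivariant Dwyer map and S is any small G-category, then S × i : S × C → S × D is a G-equivariant Dwyer map. -/

import Mathlib

open CategoryTheory

universe u

namespace GGlobal

/-- A strict action of a group (or monoid) `G` on a category `C`, given by a monoid
homomorphism into the endomorphism monoid of `C` in `Cat`. -/
abbrev GAct (G : Type u) [Monoid G] (C : Type u) [Category.{u} C] : Type u :=
  G →* CategoryTheory.End (Cat.of C)

variable {G : Type u} [Group G] {C D : Type u} [Category.{u} C] [Category.{u} D]

/-- A functor is strictly `G`-equivariant. -/
def EquivFun (ρC : GAct G C) (ρD : GAct G D) (F : C ⥤ D) : Prop :=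
  ∀ g : G, ((ρC g).toFunctor : C ⥤ C) ⋙ F = F ⋙ ((ρD g).toFunctor : D ⥤ D)

/-- The `H`-fixed points of a `G`-category: objects fixed by all of `H`. -/
structure Fixed (ρ : GAct G C) (H : Subgroup G) : Type u where
  obj : C
  fixed : ∀ h ∈ H, (((ρ h).toFunctor : C ⥤ C)).obj obj = obj

instance {ρ : GAct G C} {H : Subgroup G} : Category.{u} (Fixed ρ H) where
  Hom x y := { φ : x.obj ⟶ y.obj //
    ∀ h (hh : h ∈ H), ((ρ h).toFunctor : C ⥤ C).map φ =
      eqToHom (x.fixed h hh) ≫ φ ≫ eqToHom (y.fixed h hh).symm }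
  id x := ⟨𝟙 x.obj, by intro h hh; exact ((ρ h).toFunctor.map_id x.obj).trans ((by intros; simp : ∀ {a b : C} (p : b = a), 𝟙 b = eqToHom p ≫ 𝟙 a ≫ eqToHom p.symm) _)⟩
  comp f g := ⟨f.1 ≫ g.1, by
    intro h hh
    refine ((ρ h).toFunctor.map_comp f.1 g.1).trans ?_
    rw [f.2 h hh, g.2 h hh]
    exact (by intros; simp : ∀ {a a' b b' c c' : C} (pa : a' = a) (pb : b' = b) (pb' : b = b') (pc : c = c')
      (f : a ⟶ b) (g : b ⟶ c), (eqToHom pa ≫ f ≫ eqToHom pb') ≫ eqToHom pb ≫ g ≫ eqToHom pc =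
        eqToHom pa ≫ (f ≫ g) ≫ eqToHom pc) _ _ _ _ _ _⟩
  id_comp f := Subtype.ext (by simp)
  comp_id f := Subtype.ext (by simp)
  assoc f g h := Subtype.ext (by simp)

/-- The functor induced on `H`-fixed points by a strictly equivariant functor. -/
def FixedFunctor (ρC : GAct G C) (ρD : GAct G D) (i : C ⥤ D) (hi : EquivFun ρC ρD i)
    (H : Subgroup G) : Fixed ρC H ⥤ Fixed ρD H where
  obj x := ⟨i.obj x.obj, fun h hh => by
    have := Functor.congr_obj (hi h) x.obj
    exact this.symm.trans (congrArg i.obj (x.fixed h hh))⟩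
  map {x y} φ := ⟨i.map φ.1, fun h hh => by
    have h2 := Functor.congr_hom (hi h).symm φ.1
    refine h2.trans ?_
    exact (by intros _ _ _ _ F f _ _ _ _ _ _ hf; simp [hf, eqToHom_map] : ∀ {a b : C} {X Y : D} (F : C ⥤ C)
      (f : a ⟶ b) {e1 : X = i.obj (F.obj a)} {e4 : i.obj (F.obj b) = Y} {e5 : X = i.obj a}
      {e6 : i.obj b = Y} {e2 : F.obj a = a} {e3 : b = F.obj b}, F.map f = eqToHom e2 ≫ f ≫ eqToHom e3 →
        eqToHom e1 ≫ (F ⋙ i).map f ≫ eqToHom e4 = eqToHom e5 ≫ i.map f ≫ eqToHom e6) _ _ (φ.2 h hh)⟩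
  map_id x := Subtype.ext (by exact i.map_id x.obj)
  map_comp f g := Subtype.ext (by exact i.map_comp f.1 g.1)

/-- A functor is a sieve inclusion: fully faithful, injective on objects, and closed
under precomposition: any morphism of `D` with target in the image lies in the image. -/
structure IsSieve (i : C ⥤ D) : Prop where
  full : i.Full
  faithful : i.Faithful
  injObj : Function.Injective i.obj
  closed : ∀ {c : C} {d : D}, (d ⟶ i.obj c) → ∃ c', i.obj c' = d

/-- A functor is a cosieve inclusion: fully faithful, injective on objects, and closed
under postcomposition: any morphism of `D` with source in the image lies in the image. -/
structure IsCosieve (i : C ⥤ D) : Prop where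
  full : i.Full
  faithful : i.Faithful
  injObj : Function.Injective i.obj
  closed : ∀ {c : C} {d : D}, (i.obj c ⟶ d) → ∃ c', i.obj c' = d

/-- A Dwyer map: a sieve admitting a factorization through a cosieve by a functor
admitting a right adjoint. -/
def IsDwyer (i : C ⥤ D) : Prop :=
  IsSieve i ∧ ∃ (X : Cat.{u, u}) (f : C ⥤ X) (j : X ⥤ D),
    i = f ⋙ j ∧ IsCosieve j ∧ ∃ r : X ⥤ C, Nonempty (f ⊣ r)

/-- A `G`-equivariant Dwyer map: an equivariant sieve admitting an equivariant
factorization through an equivariant cosieve by an equivariant functor admitting a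
`G`-equivariant right adjoint (with equivariant unit and counit). -/
def IsGDwyer (ρC : GAct G C) (ρD : GAct G D) (i : C ⥤ D) : Prop :=
  IsSieve i ∧ EquivFun ρC ρD i ∧
    ∃ (X : Cat.{u, u}) (ρX : GAct G X) (f : C ⥤ X) (j : X ⥤ D),
      i = f ⋙ j ∧ EquivFun ρC ρX f ∧ EquivFun ρX ρD j ∧ IsCosieve j ∧
        ∃ (r : X ⥤ C) (adj : f ⊣ r), EquivFun ρX ρC r ∧
          (∀ (g : G) (c : C),
            HEq (((ρC g).toFunctor : C ⥤ C).map (adj.unit.app c)) (adj.unit.app (((ρC g).toFunctor : C ⥤ C).obj c))) ∧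
          (∀ (g : G) (x : X),
            HEq (((ρX g).toFunctor : X ⥤ X).map (adj.counit.app x)) (adj.counit.app (((ρX g).toFunctor : X ⥤ X).obj x)))

end GGlobal

open GGlobal

section ProdAux

variable {G : Type u} [Group G] {S C D : Type u}
  [Category.{u} S] [Category.{u} C] [Category.{u} D]

/-- The diagonal action on a product category. -/
def prodGAct (ρS : GAct G S) (ρC : GAct G C) : GAct G (S × C) where
  toFun g := (((ρS g).toFunctor : S ⥤ S).prod ((ρC g).toFunctor : C ⥤ C) : S × C ⥤ S × C).toCatHom
  map_one' := by
    show (((ρS 1).toFunctor : S ⥤ S).prod ((ρC 1).toFunctor : C ⥤ C) : S × C ⥤ S × C).toCatHom = _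
    rw [map_one ρS, map_one ρC]
    rfl
  map_mul' g h := by
    show (((ρS (g * h)).toFunctor : S ⥤ S).prod ((ρC (g * h)).toFunctor : C ⥤ C) : S × C ⥤ S × C).toCatHom = _
    rw [map_mul ρS, map_mul ρC]
    rfl

lemma prodGAct_coe (ρS : GAct G S) (ρC : GAct G C) (g : G) :
    ((prodGAct ρS ρC g).toFunctor : S × C ⥤ S × C) = ((ρS g).toFunctor : S ⥤ S).prod ((ρC g).toFunctor : C ⥤ C) := rfl

lemma prod_comp_eq {A B : Type u} [Category.{u} A] [Category.{u} B]
    (F : S ⥤ C) (F' : C ⥤ D) (K : A ⥤ B) (K' : B ⥤ A) :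
    (F.prod K) ⋙ (F'.prod K') = (F ⋙ F').prod (K ⋙ K') := rfl

lemma equiv_prod_of_equiv (ρS : GAct G S) {ρC : GAct G C} {ρD : GAct G D}
    {F : C ⥤ D} (hF : EquivFun ρC ρD F) (g : G) :
    (((ρS g).toFunctor : S ⥤ S).prod ((ρC g).toFunctor : C ⥤ C)) ⋙ ((𝟭 S).prod F) =
      ((𝟭 S).prod F) ⋙ (((ρS g).toFunctor : S ⥤ S).prod ((ρD g).toFunctor : D ⥤ D)) := by
  show (((ρS g).toFunctor : S ⥤ S)).prod (((ρC g).toFunctor : C ⥤ C) ⋙ F) =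
      (((ρS g).toFunctor : S ⥤ S)).prod (F ⋙ ((ρD g).toFunctor : D ⥤ D))
  exact congrArg _ (hF g)

lemma prodSieve {i : C ⥤ D} (h : IsSieve i) : IsSieve ((𝟭 S).prod i) := by
  haveI := h.full
  haveI := h.faithful
  refine ⟨⟨fun {a b} φ => ⟨(φ.1, i.preimage φ.2), ?_⟩⟩, ⟨fun {a b} h1 h2 e => ?_⟩, ?_, ?_⟩
  · exact Prod.ext rfl (i.map_preimage φ.2)
  · have e1 := congrArg Prod.fst e
    have e2 := congrArg Prod.snd e
    dsimp at e1 e2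
    exact Prod.ext e1 (i.map_injective e2)
  · intro p q e
    have e1 := congrArg Prod.fst e
    have e2 := congrArg Prod.snd e
    dsimp at e1 e2
    exact Prod.ext e1 (h.injObj e2)
  · intro c d φ
    obtain ⟨c', hc'⟩ := h.closed φ.2
    exact ⟨(d.1, c'), Prod.ext rfl hc'⟩

lemma prodCosieve {i : C ⥤ D} (h : IsCosieve i) : IsCosieve ((𝟭 S).prod i) := by
  haveI := h.full
  haveI := h.faithful
  refine ⟨⟨fun {a b} φ => ⟨(φ.1, i.preimage φ.2), ?_⟩⟩, ⟨fun {a b} h1 h2 e => ?_⟩, ?_, ?_⟩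
  · exact Prod.ext rfl (i.map_preimage φ.2)
  · have e1 := congrArg Prod.fst e
    have e2 := congrArg Prod.snd e
    dsimp at e1 e2
    exact Prod.ext e1 (i.map_injective e2)
  · intro p q e
    have e1 := congrArg Prod.fst e
    have e2 := congrArg Prod.snd e
    dsimp at e1 e2
    exact Prod.ext e1 (h.injObj e2)
  · intro c d φ
    obtain ⟨c', hc'⟩ := h.closed φ.2
    exact ⟨(d.1, c'), Prod.ext rfl hc'⟩

/-- The product adjunction `𝟭 S × f ⊣ 𝟭 S × r`. -/
def prodAdj {X : Type u} [Category.{u} X] {f : C ⥤ X} {r : X ⥤ C} (adj : f ⊣ r) :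
    (𝟭 S).prod f ⊣ (𝟭 S).prod r where
  unit := { app := fun p => (𝟙 p.1, adj.unit.app p.2),
            naturality := fun p q φ => by
              dsimp
              ext
              · simp
              · exact adj.unit.naturality φ.2 }
  counit := { app := fun p => (𝟙 p.1, adj.counit.app p.2),
              naturality := fun p q φ => by
                dsimp
                ext
                · simp
                · exact adj.counit.naturality φ.2 }
  left_triangle_components p := by
    dsimp
    ext
    · simp
    · exact adj.left_triangle_components p.2
  right_triangle_components p := by
    dsimp
    ext
    · simp
    · exact adj.right_triangle_components p.2

theorem heq_pair {α α' β β' : Sort _} {a : α} {a' : α'} {b : β} {b' : β'}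
    (h1 : HEq a a') (h2 : HEq b b') : HEq (a, b) (a', b') := by
  cases h1; cases h2; rfl

end ProdAux


/-- If `i : C → D` is a `G`-equivariant Dwyer map and `S` is any small `G`-category,
then `S × i : S × C → S × D` (with the diagonal `G`-actions on the products) is a
`G`-equivariant Dwyer map. -/
theorem prod_isGDwyer
    {G : Type u} [Group G] {S C D : Type u}
    [Category.{u} S] [Category.{u} C] [Category.{u} D]
    (ρS : GAct G S) (ρC : GAct G C) (ρD : GAct G D)
    (i : C ⥤ D) (hDwyer : IsGDwyer ρC ρD i)
    (ρSC : GAct G (S × C)) (ρSD : GAct G (S × D))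
    (hSC : ∀ g : G, ((ρSC g).toFunctor : S × C ⥤ S × C) = ((ρS g).toFunctor : S ⥤ S).prod ((ρC g).toFunctor : C ⥤ C))
    (hSD : ∀ g : G, ((ρSD g).toFunctor : S × D ⥤ S × D) = ((ρS g).toFunctor : S ⥤ S).prod ((ρD g).toFunctor : D ⥤ D)) :
    IsGDwyer ρSC ρSD ((𝟭 S).prod i) := by
  obtain ⟨hsieve, hequiv, X, ρX, f, j, hfact, hf, hj, hcos, r, adj, hr, hunit, hcounit⟩ := hDwyer
  refine ⟨prodSieve hsieve, ?_, Cat.of (S × X), prodGAct ρS ρX,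
    (𝟭 S).prod f, (𝟭 S).prod j, ?_, ?_, ?_, prodCosieve hcos,
    (𝟭 S).prod r, prodAdj adj, ?_, ?_, ?_⟩
  · intro g
    rw [hSC g, hSD g]
    exact equiv_prod_of_equiv ρS hequiv g
  · rw [hfact]
    rfl
  · intro g
    rw [hSC g]
    exact equiv_prod_of_equiv ρS hf g
  · intro g
    rw [hSD g]
    exact equiv_prod_of_equiv ρS hj g
  · intro g
    rw [hSC g]
    exact equiv_prod_of_equiv ρS hr g
  · intro g p
    rw [hSC g]
    show HEq ((((ρS g).toFunctor : S ⥤ S).map (𝟙 p.1), ((ρC g).toFunctor : C ⥤ C).map (adj.unit.app p.2)))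
      ((𝟙 (((ρS g).toFunctor : S ⥤ S).obj p.1), adj.unit.app (((ρC g).toFunctor : C ⥤ C).obj p.2)))
    exact heq_pair (heq_of_eq (((ρS g).toFunctor : S ⥤ S).map_id p.1)) (hunit g p.2)
  · intro g p
    show HEq ((((ρS g).toFunctor : S ⥤ S).map (𝟙 p.1), ((ρX g).toFunctor : X ⥤ X).map (adj.counit.app p.2)))
      ((𝟙 (((ρS g).toFunctor : S ⥤ S).obj p.1), adj.counit.app (((ρX g).toFunctor : X ⥤ X).obj p.2)))
    exact heq_pair (heq_of_eq (((ρS g).toFunctor : S ⥤ S).map_id p.1)) (hcounit g p.2)
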